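/- In the compression-and-randomisation cipher, the ciphertext random variable E is independent of the message random variable M': the joint distribution factorizes, P(M' = m, E = e) = P(m) · 2^{-l} for all m ∈ M and e ∈ {0,1}^l. -/
import Mathlib


open Finset

/-- The compression-and-randomisation cipher. -/
def encrypt {l : ℕ} (x : List Bool) (k r : Fin l → Bool) : Fin l → Bool :=
  fun i => if h : (i : ℕ) < x.length then Bool.xor (x.get ⟨i, h⟩) (k i) else r i

lemma card_fiber {l : ℕ} (x : List Bool) (e : Fin l → Bool) :
    (univ.filter (fun kr : (Fin l → Bool) × (Fin l → Bool) =>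
        encrypt x kr.1 kr.2 = e)).card = 2 ^ l := by
  have h := Finset.card_bij'
    (s := univ.filter (fun kr : (Fin l → Bool) × (Fin l → Bool) =>
        encrypt x kr.1 kr.2 = e))
    (t := (univ : Finset (Fin l → Bool)))
    (i := fun p _ => fun i => if (i : ℕ) < x.length then p.2 i else p.1 i)
    (j := fun s _ =>
      (fun i => if h : (i : ℕ) < x.length then Bool.xor (x.get ⟨i, h⟩) (e i) else s i,
       fun i => if (i : ℕ) < x.length then s i else e i))
    (by intro p hp; simp)
    (by
      intro s hs
      simp only [mem_filter, mem_univ, true_and]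
      funext i
      simp only [encrypt]
      by_cases h : (i : ℕ) < x.length
      · simp only [h, dif_pos]
        cases x.get ⟨i, h⟩ <;> cases e i <;> rfl
      · simp [h])
    (by
      intro p hp
      simp only [mem_filter, mem_univ, true_and] at hp
      have hp' := hp
      ext i
      · by_cases h : (i : ℕ) < x.length
        · simp only [h, if_pos, dif_pos]
          have := congrFun hp i
          simp only [encrypt, h, dif_pos] at this
          rw [← this]
          cases x.get ⟨i, h⟩ <;> cases p.1 i <;> rfl
        · simp [h]
      · by_cases h : (i : ℕ) < x.length
        · simp [h]
        · simp only [h, if_neg, if_pos]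
          have := congrFun hp i
          simp only [encrypt, h, dif_neg, not_false_iff] at this
          simp [h, this])
    (by intro s hs; funext i; by_cases h : (i : ℕ) < x.length <;> simp [h])
  simpa using h

/-- The joint distribution of message and ciphertext factorizes:
`P(M' = m, E = e) = P(m) · 2^{-l}`, i.e. the ciphertext is independent of the
message. -/
theorem joint_factorizes
    {M : Type*} [Fintype M] [Nonempty M]
    (P : M → ℝ) (hP0 : ∀ m, 0 ≤ P m) (hP1 : ∑ m, P m = 1)
    (φ : M → List Bool) (hinj : Function.Injective φ)
    (hpf : ∀ m m', m ≠ m' → ¬ (φ m <+: φ m'))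
    (l : ℕ) (hl : ∀ m, (φ m).length ≤ l) (hmax : ∃ m, (φ m).length = l)
    (m : M) (e : Fin l → Bool) :
    P m * (((univ.filter (fun kr : (Fin l → Bool) × (Fin l → Bool) =>
        encrypt (φ m) kr.1 kr.2 = e)).card : ℝ) / ((2 ^ l) * (2 ^ l))) =
      P m * (1 / 2 ^ l) := by
  rw [card_fiber (φ m) e]
  have h2 : (2 : ℝ) ^ l ≠ 0 := by positivity
  congr 1
  push_cast
  field_simp
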